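/- For every x in (−1,0), the supremum over a ∈ [−1,1] of (a²/2)·V̂₂''(x) − (4a + 9/2)·V̂₂(x) equals 0, and the supremum is attained at a = −1; equivalently, sup_{a∈[−1,1]}[(a²/2)·V̂₂''(x) − (4a+9/2)·V̂₂(x)] − f(x) = 0 on (−1,0), where f(x) = 0 for x < 0. -/
import Mathlib


/-- The candidate value function of the infinite-horizon control problem with
control set `A = [-1, 1]`. -/
noncomputable def Vhat2 (x : ℝ) : ℝ :=
  if 0 ≤ x then -Real.sinh (2 * x) else -2 * Real.sinh x

lemma Vhat2_eventually {x : ℝ} (hx : x < 0) :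
    Vhat2 =ᶠ[nhds x] fun y => -2 * Real.sinh y := by
  filter_upwards [Iio_mem_nhds hx] with y hy
  simp [Vhat2, not_le.mpr (Set.mem_Iio.mp hy)]

lemma deriv2_Vhat2 {x : ℝ} (hx : x < 0) :
    deriv (deriv Vhat2) x = -2 * Real.sinh x := by
  have h1 : deriv Vhat2 =ᶠ[nhds x] fun y => -2 * Real.cosh y := by
    filter_upwards [Iio_mem_nhds hx] with y hy
    rw [(Vhat2_eventually hy).deriv_eq]
    simp [Real.deriv_sinh]
  rw [h1.deriv_eq]
  simp [Real.deriv_cosh]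

/-- For every `x ∈ (-1,0)`, the supremum over `a ∈ [-1,1]` of
`(a²/2) V̂₂''(x) - (4a + 9/2) V̂₂(x)` equals `0` and is attained at `a = -1`
(the running cost `f` vanishes for `x < 0`). -/
theorem Vhat2_HJB_neg (x : ℝ) (hx : x ∈ Set.Ioo (-1 : ℝ) 0) :
    IsGreatest
      ((fun a : ℝ => a ^ 2 / 2 * deriv (deriv Vhat2) x - (4 * a + 9 / 2) * Vhat2 x) ''
        Set.Icc (-1 : ℝ) 1) 0 ∧
    ((-1 : ℝ) ^ 2 / 2 * deriv (deriv Vhat2) x - (4 * (-1) + 9 / 2) * Vhat2 x = 0) := by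
  obtain ⟨hx1, hx0⟩ := hx
  have hV : Vhat2 x = -2 * Real.sinh x := by simp [Vhat2, not_le.mpr hx0]
  have hD : deriv (deriv Vhat2) x = -2 * Real.sinh x := deriv2_Vhat2 hx0
  have hs : Real.sinh x < 0 := Real.sinh_neg_iff.mpr hx0
  have hval : ∀ a : ℝ, a ^ 2 / 2 * deriv (deriv Vhat2) x - (4 * a + 9 / 2) * Vhat2 x
      = (a ^ 2 / 2 - 4 * a - 9 / 2) * (-2 * Real.sinh x) := by
    intro a; rw [hD, hV]; ring
  have heq : ((-1 : ℝ) ^ 2 / 2 * deriv (deriv Vhat2) x - (4 * (-1) + 9 / 2) * Vhat2 x = 0) := by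
    rw [hval]; ring
  refine ⟨⟨⟨-1, by norm_num, heq⟩, ?_⟩, heq⟩
  rintro y ⟨a, ⟨ha1, ha2⟩, rfl⟩
  simp only
  rw [hval]
  have hg : a ^ 2 / 2 - 4 * a - 9 / 2 ≤ 0 := by nlinarith
  nlinarith
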